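/- Fedder's Lemma. Let k be a perfect field of characteristic p, let S = k[x_1,…,x_n] be the polynomial ring, let e ≥ 1, let I be an ideal of S, and let q be a prime ideal of S containing I. Write R = S/I and let π : S → R be the quotient map. Then the following are equivalent: (i) there exists a p^{-e}-linear map φ : R → R (an additive map with φ(y^{p^e}·z) = y·φ(z) for all y, z ∈ R) whose image is not contained in the prime ideal π(q) of R; (ii) the colon ideal (I^{[p^e]} : I) is not contained in q^{[p^e]}. -/

import Mathlib

/-- The `q`-th Frobenius power `I^{[q]}` of an ideal: the ideal generated by the
`q`-th powers of the elements of `I`. -/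
def frobeniusPower {S : Type*} [CommSemiring S] (I : Ideal S) (q : ℕ) : Ideal S :=
  Ideal.span ((fun a => a ^ q) '' (I : Set S))

open MvPolynomial

namespace Fedder

variable {k : Type*} [Field k] [PerfectField k]
  {p : ℕ} [Fact p.Prime] [CharP k p] {n e : ℕ}

local notation "S" => MvPolynomial (Fin n) k

/-- the `p^e`-th root in a perfect field -/
noncomputable def rt (p e : ℕ) [Fact p.Prime] [CharP k p] (c : k) : k :=
  (iterateFrobeniusEquiv k p e).symm c

lemma rt_pow (c : k) : rt p e c ^ p ^ e = c :=
  (iterateFrobeniusEquiv k p e).apply_symm_apply c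

lemma rt_pow' (c : k) : rt p e (c ^ p ^ e) = c :=
  (iterateFrobeniusEquiv k p e).symm_apply_apply c

lemma rt_add (c d : k) : rt p e (c + d) = rt p e c + rt p e d := map_add _ c d

lemma rt_mul (c d : k) : rt p e (c * d) = rt p e c * rt p e d := map_mul _ c d

lemma rt_zero : rt p e (0 : k) = 0 := map_zero _

lemma rt_one : rt p e (1 : k) = 1 := map_one _

/-- componentwise division of exponents -/
noncomputable def mdiv (Q : ℕ) (m : Fin n →₀ ℕ) : Fin n →₀ ℕ := m.mapRange (· / Q) (Nat.zero_div Q)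

/-- componentwise remainder of exponents -/
noncomputable def mmod (Q : ℕ) (m : Fin n →₀ ℕ) : Fin n →₀ ℕ := m.mapRange (· % Q) (Nat.zero_mod Q)

@[simp] lemma mdiv_apply (Q : ℕ) (m : Fin n →₀ ℕ) (i : Fin n) : mdiv Q m i = m i / Q :=
  Finsupp.mapRange_apply

@[simp] lemma mmod_apply (Q : ℕ) (m : Fin n →₀ ℕ) (i : Fin n) : mmod Q m i = m i % Q :=
  Finsupp.mapRange_apply

lemma div_mod_unique {Q : ℕ} (hQ : 0 < Q) {a b m : Fin n →₀ ℕ} (ha : ∀ i, a i < Q) :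
    Q • b + a = m ↔ (mdiv Q m = b ∧ mmod Q m = a) := by
  constructor
  · rintro rfl
    constructor <;> ext i <;>
      simp only [mdiv_apply, mmod_apply, Finsupp.add_apply, Finsupp.smul_apply, smul_eq_mul]
    · rw [Nat.mul_add_div hQ, Nat.div_eq_of_lt (ha i), add_zero]
    · rw [Nat.mul_add_mod, Nat.mod_eq_of_lt (ha i)]
  · rintro ⟨rfl, rfl⟩
    ext i
    simp only [Finsupp.add_apply, Finsupp.smul_apply, smul_eq_mul, mdiv_apply, mmod_apply]
    exact Nat.div_add_mod (m i) Q

/-- the `a`-th digit of a polynomial in its base-`p^e` expansion -/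
noncomputable def digit (p e : ℕ) [Fact p.Prime] [CharP k p] (a : Fin n →₀ ℕ) (f : S) : S :=
  ∑ m ∈ f.support, if mmod (p ^ e) m = a then
    monomial (mdiv (p ^ e) m) (rt p e (coeff m f)) else 0

lemma coeff_digit {a : Fin n →₀ ℕ} (ha : ∀ i, a i < p ^ e) (b : Fin n →₀ ℕ) (f : S) :
    coeff b (digit p e a f) = rt p e (coeff (p ^ e • b + a) f) := by
  have hQ : 0 < p ^ e := pow_pos (Nat.Prime.pos Fact.out) e
  classical
  rw [digit, coeff_sum]
  by_cases hmem : (p ^ e • b + a) ∈ f.support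
  · rw [Finset.sum_eq_single (p ^ e • b + a)]
    · obtain ⟨h1, h2⟩ := (div_mod_unique hQ ha (b := b) (m := p ^ e • b + a)).1 rfl
      simp [h1, h2, coeff_monomial]
    · intro m hm hne
      split_ifs with h1
      · rw [coeff_monomial, if_neg]
        intro h2
        exact hne ((div_mod_unique hQ ha).2 ⟨h2, h1⟩).symm
      · exact coeff_zero b
    · exact fun h => absurd hmem h
  · rw [notMem_support_iff.1 hmem, rt_zero]
    apply Finset.sum_eq_zero
    intro m hm
    split_ifs with h1
    · rw [coeff_monomial, if_neg]
      intro h2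
      exact hmem (by rw [(div_mod_unique hQ ha).2 ⟨h2, h1⟩]; exact hm)
    · rfl

lemma digit_add {a : Fin n →₀ ℕ} (ha : ∀ i, a i < p ^ e) (f g : S) :
    digit p e a (f + g) = digit p e a f + digit p e a g := by
  ext b
  simp [coeff_digit ha, coeff_add, rt_add]

lemma digit_sub {a : Fin n →₀ ℕ} (ha : ∀ i, a i < p ^ e) (f g : S) :
    digit p e a (f - g) = digit p e a f - digit p e a g := by
  ext b
  simp only [coeff_digit ha, coeff_sub]
  exact map_sub (iterateFrobeniusEquiv k p e).symm _ _

lemma digit_zero (a : Fin n →₀ ℕ) : digit p e a (0 : S) = 0 := by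
  simp [digit]

lemma digit_sum {a : Fin n →₀ ℕ} (ha : ∀ i, a i < p ^ e) {ι : Type*} (A : Finset ι)
    (g : ι → S) : digit p e a (∑ x ∈ A, g x) = ∑ x ∈ A, digit p e a (g x) := by
  classical
  induction A using Finset.induction with
  | empty => simp [digit_zero]
  | insert x A' hx ih => rw [Finset.sum_insert hx, Finset.sum_insert hx,
      digit_add ha, ih]

lemma digit_monomial (a m : Fin n →₀ ℕ) (c : k) :
    digit p e a (monomial m c) = if mmod (p ^ e) m = a then
      monomial (mdiv (p ^ e) m) (rt p e c) else 0 := by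
  classical
  by_cases hc : c = 0
  · simp [hc, digit_zero, rt_zero]
  · rw [digit, support_monomial, if_neg hc, Finset.sum_singleton, coeff_monomial, if_pos rfl]

lemma digit_pow_mul {a : Fin n →₀ ℕ} (ha : ∀ i, a i < p ^ e) (g f : S) :
    digit p e a (g ^ p ^ e * f) = g * digit p e a f := by
  have hQ : 0 < p ^ e := pow_pos (Nat.Prime.pos Fact.out) e
  have key : ∀ (u m : Fin n →₀ ℕ) (c' c : k),
      digit p e a ((monomial u c') ^ p ^ e * monomial m c)
        = monomial u c' * digit p e a (monomial m c) := by
    intro u m c' c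
    rw [monomial_pow, monomial_mul, digit_monomial, digit_monomial]
    have hmod : mmod (p ^ e) (p ^ e • u + m) = mmod (p ^ e) m := by
      ext i
      simp only [mmod_apply, Finsupp.add_apply, Finsupp.smul_apply, smul_eq_mul]
      rw [Nat.mul_add_mod]
    have hdiv : mdiv (p ^ e) (p ^ e • u + m) = u + mdiv (p ^ e) m := by
      ext i
      simp only [mdiv_apply, Finsupp.add_apply, Finsupp.smul_apply, smul_eq_mul]
      rw [Nat.mul_add_div hQ]
    rw [hmod, hdiv]
    split_ifs with h
    · rw [monomial_mul, rt_mul, rt_pow']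
    · rw [mul_zero]
  -- reduce f to monomials
  have redf : ∀ (g₀ : S), digit p e a (g₀ ^ p ^ e * f) = ∑ m ∈ f.support,
      digit p e a (g₀ ^ p ^ e * monomial m (coeff m f)) := by
    intro g₀
    conv_lhs => rw [f.as_sum, Finset.mul_sum, digit_sum ha]
  rw [redf]
  conv_rhs => rw [f.as_sum, digit_sum ha, Finset.mul_sum]
  apply Finset.sum_congr rfl
  intro m hm
  -- now reduce g to monomials
  conv_lhs => rw [g.as_sum, sum_pow_char_pow, Finset.sum_mul, digit_sum ha]
  conv_rhs => rw [g.as_sum, Finset.sum_mul]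
  apply Finset.sum_congr rfl
  intro u hu
  exact key u m (coeff u g) (coeff m f)

/-- the set of exponents with all components `< Q` -/
noncomputable def expSet (n Q : ℕ) : Finset (Fin n →₀ ℕ) :=
  (Fintype.piFinset fun _ : Fin n => Finset.range Q).image Finsupp.equivFunOnFinite.symm

lemma mem_expSet {Q : ℕ} {a : Fin n →₀ ℕ} : a ∈ expSet n Q ↔ ∀ i, a i < Q := by
  classical
  simp only [expSet, Finset.mem_image, Fintype.mem_piFinset, Finset.mem_range]
  constructor
  · rintro ⟨g, hg, rfl⟩ i
    simpa using hg i
  · intro h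
    exact ⟨⇑a, h, Finsupp.equivFunOnFinite.symm_apply_apply a⟩

/-- base-`p^e` reconstruction of a polynomial from its digits -/
lemma recon (f : S) :
    ∑ a ∈ expSet n (p ^ e), (digit p e a f) ^ p ^ e * monomial a 1 = f := by
  have hQ : 0 < p ^ e := pow_pos (Nat.Prime.pos Fact.out) e
  classical
  have recon_mono : ∀ (m : Fin n →₀ ℕ) (c : k),
      ∑ a ∈ expSet n (p ^ e), (digit p e a (monomial m c)) ^ p ^ e * monomial a 1
        = monomial m c := by
    intro m c
    rw [Finset.sum_eq_single (mmod (p ^ e) m)]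
    · rw [digit_monomial, if_pos rfl, monomial_pow, monomial_mul, rt_pow]
      rw [mul_one]
      have hm : p ^ e • mdiv (p ^ e) m + mmod (p ^ e) m = m := by
        ext i
        simp only [Finsupp.add_apply, Finsupp.smul_apply, smul_eq_mul, mdiv_apply, mmod_apply]
        exact Nat.div_add_mod (m i) _
      rw [hm]
    · intro a haA hne
      rw [digit_monomial, if_neg (fun h => hne h.symm), zero_pow hQ.ne', zero_mul]
    · intro h
      exact absurd (mem_expSet.2 fun i => by rw [mmod_apply]; exact Nat.mod_lt _ hQ) h
  conv_rhs => rw [f.as_sum]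
  have step : ∀ a ∈ expSet n (p ^ e),
      (digit p e a f) ^ p ^ e * monomial a 1 = ∑ m ∈ f.support,
        (digit p e a (monomial m (coeff m f))) ^ p ^ e * monomial a 1 := by
    intro a haA
    conv_lhs => rw [f.as_sum, digit_sum (mem_expSet.1 haA), sum_pow_char_pow, Finset.sum_mul]
  rw [Finset.sum_congr rfl step, Finset.sum_comm]
  exact Finset.sum_congr rfl fun m _ => recon_mono m (coeff m f)

/-- digits of an element of a Frobenius power lie in the ideal -/
lemma digit_mem {J : Ideal S} {a : Fin n →₀ ℕ} (ha : ∀ i, a i < p ^ e) {h : S}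
    (hh : h ∈ frobeniusPower J (p ^ e)) (c : S) : digit p e a (c * h) ∈ J := by
  revert c
  refine Submodule.span_induction ?_ ?_ ?_ ?_ hh
  · rintro y ⟨g, hg, rfl⟩ c
    rw [mul_comm, digit_pow_mul ha]
    exact Ideal.mul_mem_right _ J hg
  · intro c
    rw [mul_zero, digit_zero]
    exact J.zero_mem
  · intro x y _ _ hx hy c
    rw [mul_add, digit_add ha]
    exact J.add_mem (hx c) (hy c)
  · intro d y _ hy c
    rw [smul_eq_mul, ← mul_assoc]
    exact hy (c * d)

lemma mem_frobeniusPower {J : Ideal S} {h : S}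
    (hd : ∀ a : Fin n →₀ ℕ, (∀ i, a i < p ^ e) → digit p e a h ∈ J) :
    h ∈ frobeniusPower J (p ^ e) := by
  rw [← recon (p := p) (e := e) h]
  apply Ideal.sum_mem
  intro a haA
  exact Ideal.mul_mem_right _ _
    (Ideal.subset_span ⟨digit p e a h, hd a (mem_expSet.1 haA), rfl⟩)

/-- the top exponent `δ = (Q-1, …, Q-1)` -/
noncomputable def delta (n Q : ℕ) : Fin n →₀ ℕ :=
  Finsupp.equivFunOnFinite.symm (fun _ : Fin n => Q - 1)

@[simp] lemma delta_apply (Q : ℕ) (i : Fin n) : delta n Q i = Q - 1 := rfl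

lemma delta_lt {Q : ℕ} (hQ : 0 < Q) (i : Fin n) : delta n Q i < Q := by
  simp; omega

lemma nat_mod_key {Q A M : ℕ} (hQ : 0 < Q) (hA : A < Q) :
    (Q - 1 - A + M) % Q = Q - 1 ↔ M % Q = A := by
  obtain ⟨d, r, hr, rfl⟩ : ∃ d r, r < Q ∧ M = Q * d + r :=
    ⟨M / Q, M % Q, Nat.mod_lt _ hQ, (Nat.div_add_mod M Q).symm⟩
  have h1 : Q - 1 - A + (Q * d + r) = Q * d + (Q - 1 - A + r) := by omega
  rw [h1, Nat.mul_add_mod, Nat.mul_add_mod, Nat.mod_eq_of_lt hr]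
  rcases lt_or_ge (Q - 1 - A + r) Q with h | h
  · rw [Nat.mod_eq_of_lt h]; omega
  · rw [Nat.mod_eq_sub_mod h, Nat.mod_eq_of_lt (by omega)]; omega

lemma nat_div_key {Q A M : ℕ} (hQ : 0 < Q) (hA : A < Q) (h : M % Q = A) :
    (Q - 1 - A + M) / Q = M / Q := by
  obtain ⟨d, r, hr, rfl⟩ : ∃ d r, r < Q ∧ M = Q * d + r :=
    ⟨M / Q, M % Q, Nat.mod_lt _ hQ, (Nat.div_add_mod M Q).symm⟩
  have hr' : r = A := by rwa [Nat.mul_add_mod, Nat.mod_eq_of_lt hr] at h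
  subst hr'
  have h1 : Q - 1 - r + (Q * d + r) = Q * d + (Q - 1) := by omega
  rw [h1, Nat.mul_add_div hQ, Nat.mul_add_div hQ, Nat.div_eq_of_lt hr,
    Nat.div_eq_of_lt (by omega)]

/-- extraction: multiplying by `x^{δ-a}` moves the `a`-th digit to the top digit -/
lemma extract {a : Fin n →₀ ℕ} (ha : ∀ i, a i < p ^ e) (s : S) :
    digit p e (delta n (p ^ e)) (monomial (delta n (p ^ e) - a) 1 * s) = digit p e a s := by
  have hQ : 0 < p ^ e := pow_pos (Nat.Prime.pos Fact.out) e
  have hd : ∀ i, delta n (p ^ e) i < p ^ e := delta_lt hQ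
  classical
  have key : ∀ (m : Fin n →₀ ℕ) (c : k),
      digit p e (delta n (p ^ e)) (monomial (delta n (p ^ e) - a) 1 * monomial m c)
        = digit p e a (monomial m c) := by
    intro m c
    rw [monomial_mul, one_mul, digit_monomial, digit_monomial]
    have happ : ∀ i, (delta n (p ^ e) - a + m) i = p ^ e - 1 - a i + m i := by
      intro i
      simp [Finsupp.tsub_apply]
    have hiff : mmod (p ^ e) (delta n (p ^ e) - a + m) = delta n (p ^ e)
        ↔ mmod (p ^ e) m = a := by
      rw [Finsupp.ext_iff, Finsupp.ext_iff]
      apply forall_congr'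
      intro i
      rw [mmod_apply, mmod_apply, happ, delta_apply]
      exact nat_mod_key hQ (ha i)
    by_cases h : mmod (p ^ e) m = a
    · rw [if_pos (hiff.2 h), if_pos h]
      have hdiveq : mdiv (p ^ e) (delta n (p ^ e) - a + m) = mdiv (p ^ e) m := by
        ext i
        rw [mdiv_apply, mdiv_apply, happ]
        exact nat_div_key hQ (ha i) (by rw [← mmod_apply (p ^ e)]; exact DFunLike.congr_fun h i)
      rw [hdiveq]
    · rw [if_neg (fun hh => h (hiff.1 hh)), if_neg h]
  conv_lhs => rw [s.as_sum, Finset.mul_sum, digit_sum hd]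
  conv_rhs => rw [s.as_sum, digit_sum ha]
  exact Finset.sum_congr rfl fun m _ => key m (coeff m s)

end Fedder


open Fedder in
/-- Fedder's Lemma: for `S = k[x_1,…,x_n]`, an ideal `I` and a prime `q ⊇ I`, with
`R = S/I`, there is a `p^{-e}`-linear map `φ : R → R` whose image is not contained
in the prime `π(q)` of `R` iff `(I^{[p^e]} : I) ⊄ q^{[p^e]}`. -/
theorem fedders_lemma {k : Type*} [Field k] [PerfectField k]
    (p : ℕ) [Fact p.Prime] [CharP k p] (n e : ℕ) (he : 1 ≤ e)
    (I q : Ideal (MvPolynomial (Fin n) k)) [q.IsPrime] (hIq : I ≤ q) :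
    (∃ φ : (MvPolynomial (Fin n) k ⧸ I) → (MvPolynomial (Fin n) k ⧸ I),
      (∀ x y, φ (x + y) = φ x + φ y) ∧
      (∀ y z, φ (y ^ p ^ e * z) = y * φ z) ∧
      (∃ z, φ z ∉ q.map (Ideal.Quotient.mk I))) ↔
    ¬ (frobeniusPower I (p ^ e)).colon I ≤ frobeniusPower q (p ^ e) := by
  classical
  have hQ : 0 < p ^ e := pow_pos (Nat.Prime.pos Fact.out) e
  have hδlt : ∀ i, delta n (p ^ e) i < p ^ e := delta_lt hQ
  constructor
  · rintro ⟨φ, hadd, hlin, z, hz⟩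
    have hφ0 : φ 0 = 0 := by
      have h := hadd 0 0
      rw [add_zero] at h
      exact (left_eq_add.mp h)
    have hφsum : ∀ (A : Finset (Fin n →₀ ℕ)) (g : (Fin n →₀ ℕ) → (MvPolynomial (Fin n) k ⧸ I)),
        φ (∑ x ∈ A, g x) = ∑ x ∈ A, φ (g x) := by
      intro A g
      induction A using Finset.induction with
      | empty => simpa using hφ0
      | insert x A' hx ih =>
                        rw [Finset.sum_insert hx, Finset.sum_insert hx, hadd, ih]
    set t : (Fin n →₀ ℕ) → MvPolynomial (Fin n) k :=
      fun a => (φ (Ideal.Quotient.mk I (monomial a 1))).out with htdef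
    have ht : ∀ a, Ideal.Quotient.mk I (t a) = φ (Ideal.Quotient.mk I (monomial a 1)) :=
      fun a => Quotient.out_eq' _
    set s : MvPolynomial (Fin n) k :=
      ∑ a ∈ expSet n (p ^ e), (t a) ^ (p ^ e) * monomial (delta n (p ^ e) - a) 1 with hsdef
    have hmmoda : ∀ a : Fin n →₀ ℕ, (∀ i, a i < p ^ e) → mmod (p ^ e) a = a := by
      intro a hai; ext i; rw [mmod_apply]; exact Nat.mod_eq_of_lt (hai i)
    have hmdiva : ∀ a : Fin n →₀ ℕ, (∀ i, a i < p ^ e) → mdiv (p ^ e) a = 0 := by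
      intro a hai; ext i
      rw [mdiv_apply, Finsupp.coe_zero, Pi.zero_apply]
      exact Nat.div_eq_of_lt (hai i)
    have collapse : ∀ a ∈ expSet n (p ^ e),
        digit p e (delta n (p ^ e)) (s * monomial a 1) = t a := by
      intro a haA
      have hai := mem_expSet.1 haA
      rw [hsdef, Finset.sum_mul, digit_sum hδlt]
      rw [Finset.sum_eq_single a]
      · rw [mul_assoc, digit_pow_mul hδlt, extract hai, digit_monomial,
          if_pos (hmmoda a hai), hmdiva a hai, rt_one, monomial_zero', C_1, mul_one]
      · intro b hbA hne
        have hbi := mem_expSet.1 hbA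
        rw [mul_assoc, digit_pow_mul hδlt, extract hbi, digit_monomial,
          if_neg (fun hh => hne ((hmmoda a hai) ▸ hh).symm), mul_zero]
      · exact fun habs => absurd haA habs
    have main : ∀ f : MvPolynomial (Fin n) k,
        Ideal.Quotient.mk I (digit p e (delta n (p ^ e)) (s * f))
          = φ (Ideal.Quotient.mk I f) := by
      intro f
      have h1 : s * f = ∑ a ∈ expSet n (p ^ e),
          (digit p e a f) ^ (p ^ e) * (s * monomial a 1) := by
        conv_lhs => rw [← recon (p := p) (e := e) f]
        rw [Finset.mul_sum]
        exact Finset.sum_congr rfl fun a _ => by ring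
      have h2 : ∀ a ∈ expSet n (p ^ e),
          digit p e (delta n (p ^ e)) ((digit p e a f) ^ (p ^ e) * (s * monomial a 1))
            = digit p e a f * t a := by
        intro a ha'
        rw [digit_pow_mul hδlt, collapse a ha']
      rw [h1, digit_sum hδlt, Finset.sum_congr rfl h2, map_sum]
      conv_rhs => rw [← recon (p := p) (e := e) f]
      rw [map_sum, hφsum]
      refine Finset.sum_congr rfl fun a ha' => ?_
      rw [map_mul, map_mul, map_pow, hlin, ht]
    refine fun hle => ?_
    have hs1 : s ∈ (frobeniusPower I (p ^ e)).colon I := by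
      rw [Submodule.mem_colon]
      intro g hgI
      rw [smul_eq_mul]
      apply mem_frobeniusPower
      intro a hai
      rw [← extract hai]
      have hre : monomial (delta n (p ^ e) - a) 1 * (s * g)
          = s * (monomial (delta n (p ^ e) - a) 1 * g) := by ring
      rw [hre]
      have hπ0 : Ideal.Quotient.mk I
          (digit p e (delta n (p ^ e)) (s * (monomial (delta n (p ^ e) - a) 1 * g))) = 0 := by
        rw [main]
        have hg0 : Ideal.Quotient.mk I (monomial (delta n (p ^ e) - a) 1 * g) = 0 := by
          rw [Ideal.Quotient.eq_zero_iff_mem]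
          exact Ideal.mul_mem_left _ _ hgI
        rw [hg0, hφ0]
      rwa [Ideal.Quotient.eq_zero_iff_mem] at hπ0
    have hs2 : s ∈ frobeniusPower q (p ^ e) := hle hs1
    apply hz
    obtain ⟨f, rfl⟩ := Ideal.Quotient.mk_surjective z
    rw [← main f]
    have hdq : digit p e (delta n (p ^ e)) (s * f) ∈ q := by
      have h := digit_mem (J := q) hδlt hs2 f
      rwa [mul_comm f s] at h
    exact Ideal.mem_map_of_mem _ hdq
  · intro hnle
    obtain ⟨s, hs1, hs2⟩ := SetLike.not_le_iff_exists.1 hnle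
    have hW : ∀ f g : MvPolynomial (Fin n) k, Ideal.Quotient.mk I f = Ideal.Quotient.mk I g →
        Ideal.Quotient.mk I (digit p e (delta n (p ^ e)) (s * f))
          = Ideal.Quotient.mk I (digit p e (delta n (p ^ e)) (s * g)) := by
      intro f g hfg
      rw [Ideal.Quotient.eq] at hfg ⊢
      rw [← digit_sub hδlt, ← mul_sub]
      have hsI : s * (f - g) ∈ frobeniusPower I (p ^ e) := by
        have h := Submodule.mem_colon.1 hs1 _ hfg
        rwa [smul_eq_mul] at h
      have h := digit_mem (J := I) hδlt hsI 1
      rwa [one_mul] at h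
    have hπout : ∀ f : MvPolynomial (Fin n) k,
        Ideal.Quotient.mk I (digit p e (delta n (p ^ e)) (s * (Ideal.Quotient.mk I f).out))
          = Ideal.Quotient.mk I (digit p e (delta n (p ^ e)) (s * f)) :=
      fun f => hW _ f (Quotient.out_eq' _)
    refine ⟨fun z => Ideal.Quotient.mk I (digit p e (delta n (p ^ e)) (s * z.out)), ?_, ?_, ?_⟩
    · intro x y
      obtain ⟨f, rfl⟩ := Ideal.Quotient.mk_surjective x
      obtain ⟨g, rfl⟩ := Ideal.Quotient.mk_surjective y
      dsimp only
      rw [← map_add, hπout, hπout, hπout, mul_add, digit_add hδlt, map_add]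
    · intro y z
      obtain ⟨g, rfl⟩ := Ideal.Quotient.mk_surjective y
      obtain ⟨f, rfl⟩ := Ideal.Quotient.mk_surjective z
      dsimp only
      rw [← map_pow, ← map_mul, hπout, hπout]
      have hre : s * (g ^ (p ^ e) * f) = g ^ (p ^ e) * (s * f) := by ring
      rw [hre, digit_pow_mul hδlt, map_mul]
    · by_contra hcon
      push_neg at hcon
      apply hs2
      apply mem_frobeniusPower
      intro a hai
      rw [← extract hai]
      have h1 := hcon (Ideal.Quotient.mk I (monomial (delta n (p ^ e) - a) 1))
      rw [hπout, mul_comm s] at h1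
      have hcomap : (q.map (Ideal.Quotient.mk I)).comap (Ideal.Quotient.mk I) = q := by
        rw [Ideal.comap_map_of_surjective _ Ideal.Quotient.mk_surjective]
        have hker : Ideal.comap (Ideal.Quotient.mk I) ⊥ = I := by
          rw [← RingHom.ker_eq_comap_bot]
          exact Ideal.mk_ker
        rw [hker]
        exact sup_eq_left.2 hIq
      rw [← hcomap]
      exact h1
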